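/- arXiv:2011.07600 — 2 statements merged into one kernel-verified Lean document; each statement's English description precedes it below -/
import Mathlib

section
/- At any optimal solution of the problem maximizing ∑ₖ τₖ·log₂(1 + yₖ/τₖ) subject to ∑ₖ τₖ ≤ 1 and τₖ ≥ 0 (with all yₖ > 0), the time constraint holds with equality: ∑ₖ τₖ = 1. -/
/-- Strict monotonicity of `t ↦ t * logb 2 (1 + y/t)` on `[0, ∞)`. -/
lemma tlog_strictMono {y a b : ℝ} (hy : 0 < y) (ha : 0 ≤ a) (hab : a < b) :
    a * Real.logb 2 (1 + y / a) < b * Real.logb 2 (1 + y / b) := by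
  have hb : 0 < b := lt_of_le_of_lt ha hab
  have hyb : 0 < y / b := div_pos hy hb
  have hlogb : 0 < Real.logb 2 (1 + y / b) :=
    Real.logb_pos (by norm_num) (by linarith)
  rcases eq_or_lt_of_le ha with rfl | ha'
  · simpa using mul_pos hb hlogb
  · -- 0 < a < b
    have hp : 1 < b / a := (one_lt_div ha').mpr hab
    have hbern : 1 + (b / a) * (y / b) < (1 + y / b) ^ (b / a) :=
      one_add_mul_self_lt_rpow_one_add (by linarith) (ne_of_gt hyb) hp
    have hval : (b / a) * (y / b) = y / a := by
      field_simp
    rw [hval] at hbern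
    have hpos : (0:ℝ) < 1 + y / a := by positivity
    have hlog : Real.logb 2 (1 + y / a) < Real.logb 2 ((1 + y / b) ^ (b / a)) :=
      Real.logb_lt_logb (by norm_num) hpos hbern
    have hrw : Real.logb 2 ((1 + y / b) ^ (b / a)) =
        (b / a) * Real.logb 2 (1 + y / b) := by
      rw [Real.logb, Real.log_rpow (by linarith), Real.logb]
      ring
    rw [hrw] at hlog
    calc a * Real.logb 2 (1 + y / a) < a * ((b / a) * Real.logb 2 (1 + y / b)) :=
          (mul_lt_mul_iff_right₀ ha').mpr hlog
      _ = b * Real.logb 2 (1 + y / b) := by field_simp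

/-- At any optimal solution of maximizing ∑ₖ τₖ·log₂(1 + yₖ/τₖ) subject to
∑ₖ τₖ ≤ 1 and τₖ ≥ 0 (all yₖ > 0), the time constraint is tight: ∑ₖ τₖ = 1.
(Note: in Lean, y/0 = 0, so the term at τₖ = 0 automatically equals 0.) -/
theorem stmt_4 (K : ℕ) (hK : 1 ≤ K) (y : Fin K → ℝ) (hy : ∀ k, 0 < y k)
    (τ : Fin K → ℝ) (hτ : ∀ k, 0 ≤ τ k) (hsum : ∑ k, τ k ≤ 1)
    (hopt : ∀ τ' : Fin K → ℝ, (∀ k, 0 ≤ τ' k) → (∑ k, τ' k ≤ 1) →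
      ∑ k, τ' k * Real.logb 2 (1 + y k / τ' k) ≤
        ∑ k, τ k * Real.logb 2 (1 + y k / τ k)) :
    ∑ k, τ k = 1 := by
  by_contra hne
  have hlt : ∑ k, τ k < 1 := lt_of_le_of_ne hsum hne
  set ε : ℝ := 1 - ∑ k, τ k with hε
  have hεpos : 0 < ε := by simp [hε]; linarith
  set k0 : Fin K := ⟨0, hK⟩
  set τ' : Fin K → ℝ := Function.update τ k0 (τ k0 + ε) with hτ'
  have hτ'k0 : τ' k0 = τ k0 + ε := Function.update_self _ _ _
  have hτ'ne : ∀ k, k ≠ k0 → τ' k = τ k := fun k h => Function.update_of_ne h _ _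
  have hnn : ∀ k, 0 ≤ τ' k := by
    intro k
    by_cases h : k = k0
    · subst h; rw [hτ'k0]; have := hτ k0; linarith
    · rw [hτ'ne k h]; exact hτ k
  have hsum' : ∑ k, τ' k = 1 := by
    have : ∑ k, τ' k = ∑ k, τ k + ε := by
      rw [hτ', Finset.sum_update_of_mem (Finset.mem_univ k0),
        Finset.sdiff_singleton_eq_erase,
        ← Finset.sum_erase_add Finset.univ τ (Finset.mem_univ k0)]
      ring
    rw [this, hε]; ring
  have hle := hopt τ' hnn (le_of_eq hsum')
  -- strict increase at k0, equality elsewhere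
  have hstrict : ∑ k, τ k * Real.logb 2 (1 + y k / τ k) <
      ∑ k, τ' k * Real.logb 2 (1 + y k / τ' k) := by
    apply Finset.sum_lt_sum
    · intro k _
      by_cases h : k = k0
      · subst h
        rw [hτ'k0]
        exact le_of_lt (tlog_strictMono (hy k0) (hτ k0) (by linarith))
      · rw [hτ'ne k h]
    · exact ⟨k0, Finset.mem_univ k0, by
        rw [hτ'k0]
        exact tlog_strictMono (hy k0) (hτ k0) (by linarith)⟩
  linarith
end

section
/- For any feasible τ with 0 < ∑ₖ τₖ < 1 and scaling factor α = 1/(∑ₖ τₖ) > 1, the scaled allocation τ̄ₖ = α·τₖ is feasible (∑ₖ τ̄ₖ = 1) and achieves a strictly larger sum throughput ∑ₖ τ̄ₖ·log₂(1 + yₖ/τ̄ₖ) > ∑ₖ τₖ·log₂(1 + yₖ/τₖ), provided some τₖ > 0 and all yₖ > 0. -/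
open Real

private lemma log_gt_div (x : ℝ) (hx : 0 < x) :
    x / (1 + x) < Real.log (1 + x) := by
  have h1 : (0:ℝ) < 1 + x := by linarith
  have h := Real.log_lt_sub_one_of_pos (x := (1 + x)⁻¹) (by positivity)
    (by
      intro h
      have : (1:ℝ) + x = 1 := by
        field_simp at h
        linarith
      linarith)
  rw [Real.log_inv] at h
  have : (1 + x)⁻¹ - 1 = -(x / (1 + x)) := by field_simp; ring
  rw [this] at h
  linarith

private lemma throughput_strictMono {y : ℝ} (hy : 0 < y) :
    StrictMonoOn (fun t : ℝ => t * Real.log (1 + y / t)) (Set.Ioi 0) := by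
  apply strictMonoOn_of_deriv_pos (convex_Ioi (0:ℝ))
  · apply ContinuousOn.mul continuousOn_id
    apply ContinuousOn.log
    · exact continuousOn_const.add (continuousOn_const.div continuousOn_id
        (fun t ht => ne_of_gt ht))
    · intro t ht
      have : 0 < y / t := div_pos hy ht
      linarith
  · intro t ht
    rw [interior_Ioi] at ht
    have ht0 : (0:ℝ) < t := ht
    have hx : 0 < y / t := div_pos hy ht0
    have hut : (0:ℝ) < 1 + y / t := by linarith
    have h1 : HasDerivAt (fun s : ℝ => 1 + y / s) (-(y / t ^ 2)) t := by
      have := ((hasDerivAt_inv ht0.ne').const_mul y).const_add 1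
      simpa [div_eq_mul_inv, mul_comm] using this
    have h2 : HasDerivAt (fun s : ℝ => Real.log (1 + y / s))
        (-(y / t ^ 2) / (1 + y / t)) t := h1.log hut.ne'
    have h3 : HasDerivAt (fun s : ℝ => s * Real.log (1 + y / s))
        (1 * Real.log (1 + y / t) + t * (-(y / t ^ 2) / (1 + y / t))) t :=
      (hasDerivAt_id t).mul h2
    rw [h3.deriv]
    have key : t * (-(y / t ^ 2) / (1 + y / t)) = -((y / t) / (1 + y / t)) := by
      field_simp
    rw [key]
    have := log_gt_div (y / t) hx
    linarith

private lemma term_le {y t α : ℝ} (hy : 0 < y) (ht : 0 ≤ t) (hα : 1 < α) :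
    t * Real.logb 2 (1 + y / t) ≤ (α * t) * Real.logb 2 (1 + y / (α * t)) := by
  rcases eq_or_lt_of_le ht with h | h
  · simp [← h]
  · have hαt : t < α * t := by nlinarith
    have := throughput_strictMono hy (Set.mem_Ioi.mpr h)
      (Set.mem_Ioi.mpr (lt_trans h hαt)) hαt
    simp only [Real.logb, div_eq_mul_inv, ← mul_assoc]
    have hlog2 : 0 < (Real.log 2)⁻¹ := inv_pos.mpr (Real.log_pos (by norm_num))
    exact le_of_lt (mul_lt_mul_of_pos_right this hlog2)

private lemma term_lt {y t α : ℝ} (hy : 0 < y) (ht : 0 < t) (hα : 1 < α) :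
    t * Real.logb 2 (1 + y / t) < (α * t) * Real.logb 2 (1 + y / (α * t)) := by
  have hαt : t < α * t := by nlinarith
  have := throughput_strictMono hy (Set.mem_Ioi.mpr ht)
    (Set.mem_Ioi.mpr (lt_trans ht hαt)) hαt
  simp only [Real.logb, div_eq_mul_inv, ← mul_assoc]
  have hlog2 : 0 < (Real.log 2)⁻¹ := inv_pos.mpr (Real.log_pos (by norm_num))
  exact mul_lt_mul_of_pos_right this hlog2

/-- Scaling a feasible allocation with 0 < ∑τ < 1 by α = 1/∑τ gives a feasible
allocation with ∑ ατ = 1 and strictly larger sum throughput. -/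
theorem stmt_5 (K : ℕ) (hK : 1 ≤ K) (y : Fin K → ℝ) (hy : ∀ k, 0 < y k)
    (τ : Fin K → ℝ) (hτ : ∀ k, 0 ≤ τ k) (hpos : ∃ k, 0 < τ k)
    (hsum : ∑ k, τ k < 1) :
    (∑ k, (1 / ∑ j, τ j) * τ k = 1) ∧
    (∑ k, τ k * Real.logb 2 (1 + y k / τ k) <
      ∑ k, ((1 / ∑ j, τ j) * τ k) *
        Real.logb 2 (1 + y k / ((1 / ∑ j, τ j) * τ k))) := by
  obtain ⟨k0, hk0⟩ := hpos
  have hS : 0 < ∑ j, τ j :=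
    Finset.sum_pos' (fun k _ => hτ k) ⟨k0, Finset.mem_univ k0, hk0⟩
  have hα : 1 < 1 / ∑ j, τ j := (one_lt_div hS).mpr hsum
  constructor
  · rw [← Finset.mul_sum]
    field_simp
  · apply Finset.sum_lt_sum
    · intro k _
      exact term_le (hy k) (hτ k) hα
    · exact ⟨k0, Finset.mem_univ k0, term_lt (hy k0) hk0 hα⟩
end
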